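/- arXiv:1109.4614 — 4 statements merged into one kernel-verified Lean document; each statement's English description precedes it below -/
import Mathlib

section
/- Let f : [a,b] → ℝ^N be differentiable at t with f'(t) ≠ 0, and let ε > 0. Then for all sufficiently small δ > 0 and for any point x ∈ ℝ^N sufficiently close to f(t) - δ f'(t), one has x ≠ f(t) and the derivative at t of the function s ↦ |f(s) - x| is at least |f'(t)| - ε. -/
open RealInnerProductSpace

lemma hasDerivAt_norm_sub {N : ℕ} {f : ℝ → EuclideanSpace ℝ (Fin N)}
    {f' : EuclideanSpace ℝ (Fin N)} {t : ℝ} {x : EuclideanSpace ℝ (Fin N)}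
    (hf : HasDerivAt f f' t) (hx : f t - x ≠ 0) :
    HasDerivAt (fun s => ‖f s - x‖) (⟪f', f t - x⟫ / ‖f t - x‖) t := by
  have hg : HasDerivAt (fun s => f s - x) f' t := hf.sub_const x
  have hi := hg.inner ℝ hg
  have hq : ⟪f t - x, f t - x⟫ ≠ 0 := inner_self_ne_zero.2 hx
  have hs := hi.sqrt hq
  have hn : (fun s => Real.sqrt ⟪f s - x, f s - x⟫) = fun s => ‖f s - x‖ := by
    funext s; rw [real_inner_self_eq_norm_sq, Real.sqrt_sq (norm_nonneg _)]
  rw [hn] at hs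
  convert hs using 1
  rw [real_inner_self_eq_norm_sq, Real.sqrt_sq (norm_nonneg _),
    real_inner_comm (f t - x) f']
  have hnz : ‖f t - x‖ ≠ 0 := norm_ne_zero_iff.2 hx
  field_simp
  ring

/-- For `f` differentiable at `t` with `f'(t) ≠ 0` and `ε > 0`: for all
sufficiently small `δ > 0` and all `x` sufficiently close to `f t - δ f'(t)`,
one has `x ≠ f t` and `d/ds|ₜ ‖f s - x‖ ≥ ‖f'(t)‖ - ε`. -/
theorem stmt_4 {N : ℕ} {a b t : ℝ} (ht : t ∈ Set.Icc a b)
    (f : ℝ → EuclideanSpace ℝ (Fin N)) (f' : EuclideanSpace ℝ (Fin N))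
    (hf : HasDerivAt f f' t) (hf' : f' ≠ 0) (ε : ℝ) (hε : 0 < ε) :
    ∃ δ₀ > 0, ∀ δ : ℝ, 0 < δ → δ < δ₀ →
      ∃ r > 0, ∀ x : EuclideanSpace ℝ (Fin N), ‖x - (f t - δ • f')‖ < r →
        x ≠ f t ∧ deriv (fun s => ‖f s - x‖) t ≥ ‖f'‖ - ε := by
  set c : ℝ := min (ε / 2) (‖f'‖ / 2) with hc
  have hf'pos : 0 < ‖f'‖ := norm_pos_iff.2 hf'
  have hcpos : 0 < c := lt_min (by linarith) (by linarith)
  have hc1 : c ≤ ε / 2 := min_le_left _ _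
  have hc2 : c ≤ ‖f'‖ / 2 := min_le_right _ _
  refine ⟨1, one_pos, fun δ hδ _ => ⟨c * δ, mul_pos hcpos hδ, fun x hx => ?_⟩⟩
  set v := f t - x with hv
  have hve : v = δ • f' - (x - (f t - δ • f')) := by
    simp [hv]; abel
  have hnorme : ‖x - (f t - δ • f')‖ < c * δ := hx
  have hlow : δ * ‖f'‖ - c * δ ≤ ‖v‖ := by
    calc δ * ‖f'‖ - c * δ ≤ ‖δ • f'‖ - ‖x - (f t - δ • f')‖ := by
          rw [norm_smul, Real.norm_eq_abs, abs_of_pos hδ]; linarith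
      _ ≤ ‖v‖ := by rw [hve]; exact norm_sub_norm_le _ _
  have hvpos : 0 < ‖v‖ := by nlinarith
  have hvne : v ≠ 0 := norm_pos_iff.1 hvpos
  have hxne : x ≠ f t := fun h => hvne (by simp [hv, h])
  have hup : ‖v‖ ≤ δ * ‖f'‖ + c * δ := by
    calc ‖v‖ ≤ ‖δ • f'‖ + ‖x - (f t - δ • f')‖ := by rw [hve]; exact norm_sub_le _ _
      _ ≤ δ * ‖f'‖ + c * δ := by
          rw [norm_smul, Real.norm_eq_abs, abs_of_pos hδ]; linarith
  refine ⟨hxne, ?_⟩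
  have hd := (hasDerivAt_norm_sub hf hvne).deriv
  rw [hd]
  have hinner : δ * ‖f'‖ ^ 2 - ‖f'‖ * (c * δ) ≤ ⟪f', v⟫ := by
    have h1 : ⟪f', v⟫ = δ * ‖f'‖ ^ 2 - ⟪f', x - (f t - δ • f')⟫ := by
      rw [hve, inner_sub_right, real_inner_smul_right, real_inner_self_eq_norm_sq]
      try ring
    have h2 : |⟪f', x - (f t - δ • f')⟫| ≤ ‖f'‖ * ‖x - (f t - δ • f')‖ :=
      abs_real_inner_le_norm _ _
    have h3 : ‖f'‖ * ‖x - (f t - δ • f')‖ ≤ ‖f'‖ * (c * δ) := by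
      exact mul_le_mul_of_nonneg_left (le_of_lt hnorme) (norm_nonneg _)
    rw [h1]
    have := abs_le.1 h2
    linarith
  rw [ge_iff_le, ← hv, le_div_iff₀ hvpos]
  -- goal: (‖f'‖ - ε) * ‖v‖ ≤ ⟪f', v⟫
  rcases le_or_gt (‖f'‖ - ε) 0 with h | h
  · have : 0 ≤ ⟪f', v⟫ := by nlinarith
    nlinarith
  · calc (‖f'‖ - ε) * ‖v‖ ≤ (‖f'‖ - ε) * (δ * ‖f'‖ + c * δ) :=
          mul_le_mul_of_nonneg_left hup (le_of_lt h)
      _ ≤ δ * ‖f'‖ ^ 2 - ‖f'‖ * (c * δ) := by nlinarith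
      _ ≤ ⟪f', v⟫ := hinner
end

section
/- Let f, g : [a,b] → ℝ^N be differentiable at a point t with f(t) ≠ g(t), and let D ⊂ ℝ^N be dense. Then sup over x ∈ D with x ≠ f(t) and x ≠ g(t) of | d/ds|_{s=t} |f(s) - x| − d/ds|_{s=t} |g(s) - x| | is at least max{|f'(t)|, |g'(t)|}. -/
open scoped RealInnerProductSpace

variable {E : Type*} [NormedAddCommGroup E] [InnerProductSpace ℝ E]

lemma aux_hasDerivAt_norm_sub {f : ℝ → E} {f' : E} {t : ℝ} (hf : HasDerivAt f f' t)
    {x : E} (hx : x ≠ f t) :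
    HasDerivAt (fun s => ‖f s - x‖) (⟪f', f t - x⟫ / ‖f t - x‖) t := by
  have hy : f t - x ≠ 0 := sub_ne_zero.mpr (Ne.symm hx)
  have h1 : HasDerivAt (fun s => ⟪f s - x, f s - x⟫)
      (⟪f t - x, f'⟫ + ⟪f', f t - x⟫) t :=
    (hf.sub_const x).inner ℝ (hf.sub_const x)
  have hne : ⟪f t - x, f t - x⟫ ≠ (0:ℝ) := by
    simpa [inner_self_eq_zero] using hy
  have h2 := (Real.hasDerivAt_sqrt hne).comp t h1
  have heq : (fun s => Real.sqrt ⟪f s - x, f s - x⟫) = fun s => ‖f s - x‖ := by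
    funext s
    rw [real_inner_self_eq_norm_sq, Real.sqrt_sq (norm_nonneg _)]
  simp only [Function.comp_def] at h2
  rw [heq] at h2
  refine h2.congr_deriv ?_
  rw [real_inner_self_eq_norm_sq, Real.sqrt_sq (norm_nonneg _), real_inner_comm (f t - x)]
  have hn : ‖f t - x‖ ≠ 0 := norm_ne_zero_iff.mpr hy
  field_simp
  ring

lemma aux_key {f g : ℝ → E} {f' g' : E} {t : ℝ}
    (hf : HasDerivAt f f' t) (hg : HasDerivAt g g' t) (hfg : f t ≠ g t)
    (D : Set E) (hD : Dense D) :
    ‖f'‖ ≤ sSup {r : ℝ | ∃ x ∈ D, x ≠ f t ∧ x ≠ g t ∧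
      r = |deriv (fun s => ‖f s - x‖) t - deriv (fun s => ‖g s - x‖) t|} := by
  set A : E → ℝ := fun x => ⟪f', f t - x⟫ / ‖f t - x‖ with hA_def
  set B : E → ℝ := fun x => ⟪g', g t - x⟫ / ‖g t - x‖ with hB_def
  set Φ : E → ℝ := fun x => |A x - B x| with hΦ_def
  set S : Set ℝ := {r : ℝ | ∃ x ∈ D, x ≠ f t ∧ x ≠ g t ∧
      r = |deriv (fun s => ‖f s - x‖) t - deriv (fun s => ‖g s - x‖) t|} with hS_def
  have hderiv : ∀ x : E, x ≠ f t → x ≠ g t →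
      |deriv (fun s => ‖f s - x‖) t - deriv (fun s => ‖g s - x‖) t| = Φ x := by
    intro x h1 h2
    rw [(aux_hasDerivAt_norm_sub hf h1).deriv, (aux_hasDerivAt_norm_sub hg h2).deriv]
  have habs : ∀ (v y : E), |⟪v, y⟫ / ‖y‖| ≤ ‖v‖ := by
    intro v y
    rcases eq_or_ne y 0 with rfl | hy
    · simp
    · rw [abs_div, abs_norm, div_le_iff₀ (norm_pos_iff.mpr hy)]
      exact abs_real_inner_le_norm v y
  have hBdd : BddAbove S := by
    refine ⟨‖f'‖ + ‖g'‖, ?_⟩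
    rintro r ⟨x, hxD, h1, h2, rfl⟩
    rw [hderiv x h1 h2]
    calc Φ x ≤ |A x| + |B x| := abs_sub _ _
      _ ≤ ‖f'‖ + ‖g'‖ := add_le_add (habs f' _) (habs g' _)
  have hcont : ∀ p : E, p ≠ f t → p ≠ g t → ContinuousAt Φ p := by
    intro p hp1 hp2
    have hn1 : ‖f t - p‖ ≠ 0 := norm_ne_zero_iff.mpr (sub_ne_zero.mpr (Ne.symm hp1))
    have hn2 : ‖g t - p‖ ≠ 0 := norm_ne_zero_iff.mpr (sub_ne_zero.mpr (Ne.symm hp2))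
    have hA : ContinuousAt A p :=
      ContinuousAt.div ((continuous_const.inner (continuous_const.sub continuous_id)).continuousAt)
        ((continuous_const.sub continuous_id).norm.continuousAt) hn1
    have hB : ContinuousAt B p :=
      ContinuousAt.div ((continuous_const.inner (continuous_const.sub continuous_id)).continuousAt)
        ((continuous_const.sub continuous_id).norm.continuousAt) hn2
    exact (hA.sub hB).abs
  have step1 : ∀ p : E, p ≠ f t → p ≠ g t → ∀ δ > (0:ℝ), ∃ r ∈ S, Φ p - δ ≤ r := by
    intro p hp1 hp2 δ hδ
    have hc := hcont p hp1 hp2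
    rw [Metric.continuousAt_iff] at hc
    obtain ⟨ρ, hρ, hball⟩ := hc δ hδ
    set ρ' := min ρ (min (dist p (f t)) (dist p (g t))) with hρ'_def
    have hρ' : 0 < ρ' := lt_min hρ (lt_min (dist_pos.mpr hp1) (dist_pos.mpr hp2))
    obtain ⟨x, hxD, hxp⟩ := hD.exists_dist_lt p hρ'
    have hd1 : dist p x < dist p (f t) :=
      hxp.trans_le (le_trans (min_le_right _ _) (min_le_left _ _))
    have hd2 : dist p x < dist p (g t) :=
      hxp.trans_le (le_trans (min_le_right _ _) (min_le_right _ _))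
    have hx1 : x ≠ f t := by intro h; rw [h] at hd1; exact lt_irrefl _ hd1
    have hx2 : x ≠ g t := by intro h; rw [h] at hd2; exact lt_irrefl _ hd2
    have hΦx : |Φ x - Φ p| < δ := by
      have := hball (show dist x p < ρ by rw [dist_comm]; exact hxp.trans_le (min_le_left _ _))
      rwa [Real.dist_eq] at this
    refine ⟨Φ x, ⟨x, hxD, hx1, hx2, (hderiv x hx1 hx2).symm⟩, ?_⟩
    have := (abs_lt.mp hΦx).1
    linarith
  have step2 : ∀ δ > (0:ℝ), ∃ p : E, p ≠ f t ∧ p ≠ g t ∧ ‖f'‖ - δ ≤ Φ p := by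
    intro δ hδ
    rcases eq_or_ne f' 0 with hf0 | hf0
    · -- trivial case f' = 0
      set w := g t - f t with hw_def
      have hw : w ≠ 0 := sub_ne_zero.mpr (Ne.symm hfg)
      have hv : (2⁻¹ : ℝ) • w ≠ 0 := smul_ne_zero (by norm_num) hw
      refine ⟨f t + (2⁻¹ : ℝ) • w, ?_, ?_, ?_⟩
      · intro h; exact hv (add_eq_left.mp h)
      · intro h
        have h2 : (2⁻¹ : ℝ) • w = w := eq_sub_iff_add_eq'.mpr h
        have h3 : (2⁻¹ : ℝ) • w = (1 : ℝ) • w := by rw [h2, one_smul]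
        have := smul_left_injective ℝ hw h3
        norm_num at this
      · have : ‖f'‖ = 0 := by rw [hf0, norm_zero]
        rw [this]
        have := abs_nonneg (A (f t + (2⁻¹ : ℝ) • w) - B (f t + (2⁻¹ : ℝ) • w))
        simp only [hΦ_def]
        linarith
    · have hnf : ‖f'‖ ≠ 0 := norm_ne_zero_iff.mpr hf0
      have hnfpos : 0 < ‖f'‖ := norm_pos_iff.mpr hf0
      set c := B (f t) with hc_def
      have hn2 : ‖g t - f t‖ ≠ 0 := norm_ne_zero_iff.mpr (sub_ne_zero.mpr (Ne.symm hfg))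
      have hBcont : ContinuousAt B (f t) :=
        ContinuousAt.div
          ((continuous_const.inner (continuous_const.sub continuous_id)).continuousAt)
          ((continuous_const.sub continuous_id).norm.continuousAt) hn2
      rw [Metric.continuousAt_iff] at hBcont
      obtain ⟨η, hη, hB'⟩ := hBcont δ hδ
      set d := dist (f t) (g t) with hd_def
      have hd0 : 0 < d := dist_pos.mpr hfg
      set ε := min (η/2) (d/2) with hε_def
      have hε : 0 < ε := lt_min (by linarith) (by linarith)
      set σ : ℝ := if 0 ≤ c then -1 else 1 with hσ_def
      have hσabs : |σ| = 1 := by rw [hσ_def]; split <;> norm_num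
      have hσ0 : σ ≠ 0 := by rw [hσ_def]; split <;> norm_num
      set p := f t - (σ * ε * ‖f'‖⁻¹) • f' with hp_def
      have hfp : f t - p = (σ * ε * ‖f'‖⁻¹) • f' := by rw [hp_def, sub_sub_cancel]
      have hnorm : ‖f t - p‖ = ε := by
        rw [hfp, norm_smul, Real.norm_eq_abs, abs_mul, abs_mul, hσabs, abs_of_pos hε,
          abs_inv, abs_norm]
        field_simp
      have hp1 : p ≠ f t := by
        intro h
        rw [h, sub_self, norm_zero] at hnorm
        exact hε.ne hnorm
      have hdist : dist p (f t) = ε := by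
        rw [dist_eq_norm, ← neg_sub, norm_neg, hnorm]
      have hεd : ε ≤ d/2 := min_le_right _ _
      have hεη : ε ≤ η/2 := min_le_left _ _
      have hp2 : p ≠ g t := by
        intro h
        rw [h] at hdist
        rw [dist_comm] at hdist
        rw [← hd_def] at hdist
        linarith
      have hAp : A p = σ * ‖f'‖ := by
        have h0 : A p = ⟪f', f t - p⟫ / ‖f t - p‖ := rfl
        rw [h0, hnorm, hfp, real_inner_smul_right, real_inner_self_eq_norm_sq]
        field_simp
      have hBp : |B p - c| < δ := by
        have := hB' (show dist p (f t) < η by rw [hdist]; linarith)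
        rwa [Real.dist_eq] at this
      have hlow : ‖f'‖ + |c| ≤ |A p - c| := by
        rw [hAp, hσ_def]
        split_ifs with hc
        · have h1 : (-1:ℝ) * ‖f'‖ - c ≤ 0 := by nlinarith [norm_nonneg f']
          rw [abs_of_nonneg hc, abs_of_nonpos h1]
          linarith
        · push_neg at hc
          have h1 : (0:ℝ) ≤ 1 * ‖f'‖ - c := by nlinarith [norm_nonneg f']
          rw [abs_of_neg hc, abs_of_nonneg h1]
          linarith
      refine ⟨p, hp1, hp2, ?_⟩
      have htri : |A p - c| ≤ |A p - B p| + |B p - c| := abs_sub_le _ _ _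
      have hcnn : 0 ≤ |c| := abs_nonneg c
      simp only [hΦ_def]
      linarith
  refine le_of_forall_pos_le_add ?_
  intro δ hδ
  obtain ⟨p, hp1, hp2, hp3⟩ := step2 (δ/2) (by linarith)
  obtain ⟨r, hrS, hr⟩ := step1 p hp1 hp2 (δ/2) (by linarith)
  have := le_csSup hBdd hrS
  linarith

/-- If `f, g` are differentiable at `t` with `f t ≠ g t` and `D ⊆ ℝ^N` is dense,
then the supremum over `x ∈ D`, `x ≠ f t`, `x ≠ g t`, of
`|d/ds|ₜ‖f s - x‖ - d/ds|ₜ‖g s - x‖|` is at least `max {‖f'(t)‖, ‖g'(t)‖}`. -/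
theorem stmt_5 {N : ℕ} {a b t : ℝ} (ht : t ∈ Set.Icc a b)
    (f g : ℝ → EuclideanSpace ℝ (Fin N)) (f' g' : EuclideanSpace ℝ (Fin N))
    (hf : HasDerivAt f f' t) (hg : HasDerivAt g g' t) (hfg : f t ≠ g t)
    (D : Set (EuclideanSpace ℝ (Fin N))) (hD : Dense D) :
    max ‖f'‖ ‖g'‖ ≤
      sSup {r : ℝ | ∃ x ∈ D, x ≠ f t ∧ x ≠ g t ∧
        r = |deriv (fun s => ‖f s - x‖) t - deriv (fun s => ‖g s - x‖) t|} := by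
  have h1 := aux_key hf hg hfg D hD
  have h2 := aux_key hg hf hfg.symm D hD
  refine max_le h1 ?_
  have hset : {r : ℝ | ∃ x ∈ D, x ≠ g t ∧ x ≠ f t ∧
      r = |deriv (fun s => ‖g s - x‖) t - deriv (fun s => ‖f s - x‖) t|} =
      {r : ℝ | ∃ x ∈ D, x ≠ f t ∧ x ≠ g t ∧
      r = |deriv (fun s => ‖f s - x‖) t - deriv (fun s => ‖g s - x‖) t|} := by
    ext r
    constructor
    · rintro ⟨x, hx, ha, hb, rfl⟩
      exact ⟨x, hx, hb, ha, (abs_sub_comm _ _)⟩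
    · rintro ⟨x, hx, ha, hb, rfl⟩
      exact ⟨x, hx, hb, ha, (abs_sub_comm _ _)⟩
  rwa [hset] at h2
end

section
/- Let f, g : [a,b] → ℝ^N be differentiable at t with f(t) ≠ g(t), let {x_i} be a dense sequence in ℝ^N, and let κ : ℝ^N → ℓ^∞ be the associated Kuratowski embedding. If the composed curves κ∘f and κ∘g have a w*-derivative of their difference at t given coordinatewise by ((d/ds|_{s=t}|f(s)-x_i|) − (d/ds|_{s=t}|g(s)-x_i|))_{i}, then ‖(κ∘f − κ∘g)'(t)‖_∞ ≥ max{|f'(t)|, |g'(t)|} ≥ (|f'(t)| + |g'(t)|)/2. -/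
open scoped ENNReal RealInnerProductSpace

private lemma hasDerivAt_norm_comp {E : Type*} [NormedAddCommGroup E]
    [InnerProductSpace ℝ E] {h : ℝ → E} {h' : E} {t : ℝ}
    (hh : HasDerivAt h h' t) (h0 : h t ≠ 0) :
    HasDerivAt (fun s => ‖h s‖) (⟪h t, h'⟫ / ‖h t‖) t := by
  have hsq : HasDerivAt (fun s => ‖h s‖ ^ 2) (2 * ⟪h t, h'⟫) t := by
    simpa [real_inner_comm, two_mul, mul_comm] using hh.norm_sq
  have hne : ‖h t‖ ^ 2 ≠ 0 := pow_ne_zero _ (norm_ne_zero_iff.2 h0)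
  have hsqrt := (Real.hasDerivAt_sqrt hne).comp t hsq
  have heq : (fun s => Real.sqrt (‖h s‖ ^ 2)) = fun s => ‖h s‖ := by
    funext s; rw [Real.sqrt_sq (norm_nonneg _)]
  rw [Real.sqrt_sq (norm_nonneg _)] at hsqrt
  have : 1 / (2 * ‖h t‖) * (2 * ⟪h t, h'⟫) = ⟪h t, h'⟫ / ‖h t‖ := by
    have : ‖h t‖ ≠ 0 := norm_ne_zero_iff.2 h0
    field_simp
  rw [← heq, ← this]
  exact hsqrt

private lemma aux_ge {E : Type*} [NormedAddCommGroup E] [InnerProductSpace ℝ E]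
    {t : ℝ} {f g : ℝ → E} {f' g' : E}
    (hf : HasDerivAt f f' t) (hg : HasDerivAt g g' t) (hfg : f t ≠ g t)
    {xi : ℕ → E} (hxi : DenseRange xi)
    (D : lp (fun _ : ℕ => ℝ) ∞)
    (hD : ∀ i : ℕ, D i =
      deriv (fun s => ‖f s - xi i‖) t - deriv (fun s => ‖g s - xi i‖) t) :
    ‖f'‖ ≤ ‖D‖ := by
  set Φ : E → ℝ := fun x => ⟪f t - x, f'⟫ / ‖f t - x‖ - ⟪g t - x, g'⟫ / ‖g t - x‖ with hΦdef
  have hDΦ : ∀ i : ℕ, xi i ≠ f t → xi i ≠ g t → D i = Φ (xi i) := by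
    intro i h1 h2
    have hF : HasDerivAt (fun s => ‖f s - xi i‖) (⟪f t - xi i, f'⟫ / ‖f t - xi i‖) t :=
      hasDerivAt_norm_comp (hf.sub_const _) (sub_ne_zero.2 h1.symm)
    have hG : HasDerivAt (fun s => ‖g s - xi i‖) (⟪g t - xi i, g'⟫ / ‖g t - xi i‖) t :=
      hasDerivAt_norm_comp (hg.sub_const _) (sub_ne_zero.2 h2.symm)
    rw [hD i, hF.deriv, hG.deriv]
  refine le_of_forall_pos_le_add ?_
  intro ε hε
  rcases eq_or_ne f' 0 with hf0 | hf0
  · simp only [hf0, norm_zero]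
    positivity
  have hfn : (0:ℝ) < ‖f'‖ := norm_pos_iff.2 hf0
  have hGF : g t - f t ≠ 0 := sub_ne_zero.2 (Ne.symm hfg)
  have hGFn : (0:ℝ) < ‖g t - f t‖ := norm_pos_iff.2 hGF
  set c : ℝ := ⟪g t - f t, g'⟫ / ‖g t - f t‖ with hc
  -- choose a sign
  obtain ⟨σ, hσ1, hσ2⟩ : ∃ σ : ℝ, |σ| = 1 ∧ ‖f'‖ ≤ |σ * ‖f'‖ - c| := by
    rcases le_total 0 c with hc0 | hc0
    · exact ⟨-1, by norm_num, by rw [abs_of_nonpos (by nlinarith)]; nlinarith⟩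
    · exact ⟨1, by norm_num, by rw [abs_of_nonneg (by nlinarith)]; nlinarith⟩
  set w : E := σ • (‖f'‖⁻¹ • f') with hw
  have hwn : ‖w‖ = 1 := by
    rw [hw, norm_smul, norm_smul, Real.norm_eq_abs, hσ1, Real.norm_eq_abs,
      abs_of_nonneg (by positivity)]
    field_simp
  have hwf : ⟪w, f'⟫ = σ * ‖f'‖ := by
    rw [hw, real_inner_smul_left, real_inner_smul_left, real_inner_self_eq_norm_sq]
    field_simp
  -- the function h δ
  set hh : ℝ → ℝ := fun δ => ⟪g t - f t + δ • w, g'⟫ / ‖g t - f t + δ • w‖ with hhdef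
  have hh0 : hh 0 = c := by simp [hhdef, hc]
  have hhcont : ContinuousAt hh 0 := by
    have hc1 : Continuous fun δ : ℝ => g t - f t + δ • w :=
      continuous_const.add (continuous_id.smul continuous_const)
    apply ContinuousAt.div
    · exact (Continuous.inner hc1 continuous_const).continuousAt
    · exact hc1.norm.continuousAt
    · simpa using hGF
  have hev0 : ∀ᶠ δ in nhds (0:ℝ), |hh δ - c| < ε / 3 := by
    have := hhcont.tendsto
    rw [hh0] at this
    have := Metric.tendsto_nhds.1 this (ε/3) (by linarith)
    simpa [Real.dist_eq] using this
  obtain ⟨r0, hr0, hball0⟩ := Metric.eventually_nhds_iff.1 hev0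
  set δ : ℝ := min (r0/2) (‖g t - f t‖ / 2) with hδdef
  have hδpos : 0 < δ := lt_min (by linarith) (by linarith)
  have hδlt : δ < ‖g t - f t‖ := (min_le_right _ _).trans_lt (by linarith)
  have hδr : |hh δ - c| < ε / 3 := by
    apply hball0
    rw [Real.dist_eq, sub_zero, abs_of_pos hδpos]
    exact (min_le_left _ _).trans_lt (by linarith)
  set p : E := f t - δ • w with hp
  have hfp : f t - p = δ • w := by rw [hp]; abel
  have hgp : g t - p = g t - f t + δ • w := by rw [hp]; abel
  have hδw : ‖δ • w‖ = δ := by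
    rw [norm_smul, hwn, Real.norm_eq_abs, abs_of_pos hδpos, mul_one]
  have hnfp : ‖f t - p‖ = δ := by rw [hfp, hδw]
  have hpf : p ≠ f t := by
    intro h
    rw [h, sub_self, norm_zero] at hnfp
    exact absurd hnfp.symm hδpos.ne'
  have hpg : p ≠ g t := by
    intro h
    have h0 : g t - f t + δ • w = 0 := by rw [← hgp, h, sub_self]
    have h2 : ‖g t - f t‖ - ‖δ • w‖ ≤ ‖g t - f t + δ • w‖ := by
      simpa [sub_neg_eq_add] using norm_sub_norm_le (g t - f t) (-(δ • w))
    rw [h0, norm_zero, hδw] at h2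
    linarith
  have hΦp : Φ p = σ * ‖f'‖ - hh δ := by
    show ⟪f t - p, f'⟫ / ‖f t - p‖ - ⟪g t - p, g'⟫ / ‖g t - p‖ =
      σ * ‖f'‖ - ⟪g t - f t + δ • w, g'⟫ / ‖g t - f t + δ • w‖
    rw [hfp, hgp, hδw, real_inner_smul_left, hwf]
    congr 1
    field_simp
  have hΦp_lb : ‖f'‖ - ε/3 ≤ |Φ p| := by
    have : |σ * ‖f'‖ - c| ≤ |Φ p| + |hh δ - c| := by
      have : σ * ‖f'‖ - c = Φ p + (hh δ - c) := by rw [hΦp]; ring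
      rw [this]; exact abs_add_le _ _
    linarith [hσ2, hδr]
  -- continuity of Φ at p
  have hΦcont : ContinuousAt Φ p := by
    have hc1 : Continuous fun x : E => f t - x := continuous_const.sub continuous_id
    have hc2 : Continuous fun x : E => g t - x := continuous_const.sub continuous_id
    apply ContinuousAt.sub
    · apply ContinuousAt.div
      · exact (Continuous.inner hc1 continuous_const).continuousAt
      · exact hc1.norm.continuousAt
      · simpa [sub_ne_zero] using Ne.symm hpf
    · apply ContinuousAt.div
      · exact (Continuous.inner hc2 continuous_const).continuousAt
      · exact hc2.norm.continuousAt
      · simpa [sub_ne_zero] using Ne.symm hpg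
  have hev : ∀ᶠ x in nhds p, |Φ x - Φ p| < ε/3 ∧ x ≠ f t ∧ x ≠ g t := by
    refine Filter.Eventually.and ?_ (Filter.Eventually.and ?_ ?_)
    · have := Metric.tendsto_nhds.1 hΦcont.tendsto (ε/3) (by linarith)
      simpa [Real.dist_eq] using this
    · exact isOpen_ne.eventually_mem hpf
    · exact isOpen_ne.eventually_mem hpg
  obtain ⟨r, hr, hball⟩ := Metric.eventually_nhds_iff.1 hev
  obtain ⟨i, hi⟩ := hxi.exists_mem_open Metric.isOpen_ball ⟨p, Metric.mem_ball_self hr⟩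
  obtain ⟨h1, h2, h3⟩ := hball (Metric.mem_ball.1 hi)
  have hDi : D i = Φ (xi i) := hDΦ i h2 h3
  have hDi_lb : ‖f'‖ - 2*ε/3 ≤ |D i| := by
    rw [hDi]
    have h4 := abs_sub_abs_le_abs_sub (Φ p) (Φ (xi i))
    rw [abs_sub_comm (Φ p) (Φ (xi i))] at h4
    linarith
  have hnorm : |D i| ≤ ‖D‖ := by
    have h5 := lp.norm_apply_le_norm ENNReal.top_ne_zero D i
    rwa [Real.norm_eq_abs] at h5
  linarith

/-- Lemma 6 of the paper: if the difference of the Kuratowski embeddings of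
two curves has a w*-derivative at `t` given coordinatewise by the derivatives
of the distance functions, then its `ℓ^∞` norm is at least
`max {‖f'(t)‖, ‖g'(t)‖} ≥ (‖f'(t)‖ + ‖g'(t)‖)/2`. -/
theorem stmt_6 {N : ℕ} {a b t : ℝ} (ht : t ∈ Set.Icc a b)
    (f g : ℝ → EuclideanSpace ℝ (Fin N)) (f' g' : EuclideanSpace ℝ (Fin N))
    (hf : HasDerivAt f f' t) (hg : HasDerivAt g g' t) (hfg : f t ≠ g t)
    (xi : ℕ → EuclideanSpace ℝ (Fin N)) (hxi : DenseRange xi)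
    (x0 : EuclideanSpace ℝ (Fin N))
    (D : lp (fun _ : ℕ => ℝ) ∞)
    (hD : ∀ i : ℕ, D i =
      deriv (fun s => ‖f s - xi i‖) t - deriv (fun s => ‖g s - xi i‖) t) :
    ‖D‖ ≥ max ‖f'‖ ‖g'‖ ∧ max ‖f'‖ ‖g'‖ ≥ (‖f'‖ + ‖g'‖) / 2 := by
  constructor
  · have h1 : ‖f'‖ ≤ ‖D‖ := aux_ge hf hg hfg hxi D hD
    have h2 : ‖g'‖ ≤ ‖D‖ := by
      have hD' : ∀ i : ℕ, (-D) i =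
          deriv (fun s => ‖g s - xi i‖) t - deriv (fun s => ‖f s - xi i‖) t := by
        intro i
        have : (-D) i = -(D i) := by
          rw [show ((-D : lp (fun _ : ℕ => ℝ) ∞) : ∀ _ : ℕ, ℝ) = -(D : ∀ _ : ℕ, ℝ) from
            lp.coeFn_neg D]
          rfl
        rw [this, hD i]; ring
      have := aux_ge hg hf hfg.symm hxi (-D) hD'
      rwa [norm_neg] at this
    exact max_le h1 h2
  · rcases le_total ‖f'‖ ‖g'‖ with h | h
    · rw [max_eq_right h]; linarith
    · rw [max_eq_left h]; linarith
end

section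
/- Let f : [a,b] → V be Lipschitz with constant L, where V = Y* is the dual of a separable Banach space Y. Then for almost every x ∈ (a,b) there exists f'(x) ∈ V with ‖f'(x)‖ ≤ L such that ⟨v, (f(x+h) - f(x))/h⟩ → ⟨v, f'(x)⟩ as h → 0 for every v ∈ Y. -/
open MeasureTheory Filter

/-- A Lipschitz map from `[a,b]` into the dual of a separable Banach space
has a w*-derivative of norm at most the Lipschitz constant almost everywhere. -/
theorem stmt_12 {Y : Type*} [NormedAddCommGroup Y] [NormedSpace ℝ Y]
    [CompleteSpace Y] [TopologicalSpace.SeparableSpace Y]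
    (a b : ℝ) (L : NNReal) (f : ℝ → (Y →L[ℝ] ℝ))
    (hf : LipschitzOnWith L f (Set.Icc a b)) :
    ∀ᵐ x ∂(volume.restrict (Set.Ioo a b)),
      ∃ f' : Y →L[ℝ] ℝ, ‖f'‖ ≤ L ∧ ∀ v : Y,
        Tendsto (fun h : ℝ => (f (x + h) v - f x v) / h)
          (nhdsWithin 0 {0}ᶜ) (nhds (f' v)) := by
  haveI : Nonempty Y := ⟨0⟩
  set u : ℕ → Y := TopologicalSpace.denseSeq Y with hu
  have hud : DenseRange u := TopologicalSpace.denseRange_denseSeq Y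
  -- Each coordinate function is Lipschitz on `Icc a b`
  have glip : ∀ n : ℕ, LipschitzOnWith (L * ‖u n‖₊) (fun x => f x (u n)) (Set.Icc a b) := by
    intro n
    apply LipschitzOnWith.of_dist_le_mul
    intro x hx y hy
    have h1 : dist (f x (u n)) (f y (u n)) = |(f x - f y) (u n)| := by
      simp [dist_eq_norm, ContinuousLinearMap.sub_apply]
    rw [h1]
    calc |(f x - f y) (u n)| ≤ ‖f x - f y‖ * ‖u n‖ := (f x - f y).le_opNorm (u n)
      _ ≤ (L * dist x y) * ‖u n‖ := by
          have := hf.dist_le_mul x hx y hy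
          rw [dist_eq_norm] at this
          exact mul_le_mul_of_nonneg_right this (norm_nonneg _)
      _ = ↑(L * ‖u n‖₊) * dist x y := by push_cast; ring
  choose G hG hGeq using fun n => (glip n).extend_real
  have hrad : ∀ᵐ x ∂(volume : Measure ℝ), ∀ n, DifferentiableAt ℝ (G n) x :=
    ae_all_iff.2 fun n => (hG n).ae_differentiableAt
  have hae : ∀ᵐ x ∂(volume.restrict (Set.Ioo a b)),
      (∀ n, DifferentiableAt ℝ (G n) x) ∧ x ∈ Set.Ioo a b :=
    (ae_restrict_of_ae hrad).and (ae_restrict_mem measurableSet_Ioo)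
  filter_upwards [hae] with x hx
  obtain ⟨hdiff, hxmem⟩ := hx
  have hxIcc : x ∈ Set.Icc a b := Set.Ioo_subset_Icc_self hxmem
  set l : Filter ℝ := nhdsWithin 0 {0}ᶜ with hl
  haveI : l.NeBot := by rw [hl]; infer_instance
  set q : ℝ → Y → ℝ := fun h v => (f (x + h) v - f x v) / h with hq
  -- eventually, `x + h ∈ Icc a b` and `h ≠ 0`
  have hmem : ∀ᶠ h in l, x + h ∈ Set.Icc a b ∧ h ≠ 0 := by
    have h1 : ∀ᶠ h in nhds (0:ℝ), x + h ∈ Set.Icc a b := by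
      have : Tendsto (fun h : ℝ => x + h) (nhds 0) (nhds x) := by
        simpa using (tendsto_const_nhds.add tendsto_id : Tendsto (fun h : ℝ => x + h) (nhds 0) (nhds (x + 0)))
      exact this (Filter.mem_of_superset (isOpen_Ioo.mem_nhds hxmem) Set.Ioo_subset_Icc_self)
    have h2 : ∀ᶠ h in l, h ≠ 0 := by
      filter_upwards [self_mem_nhdsWithin] with h hh using hh
    exact (eventually_nhdsWithin_of_eventually_nhds h1).and h2
  -- key Lipschitz estimate on difference quotients
  have key : ∀ v w : Y, ∀ h : ℝ, x + h ∈ Set.Icc a b → h ≠ 0 →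
      |q h v - q h w| ≤ L * ‖v - w‖ := by
    intro v w h hh hh0
    have h1 : q h v - q h w = (f (x + h) - f x) (v - w) / h := by
      simp only [hq, ContinuousLinearMap.sub_apply, map_sub]
      field_simp
    rw [h1, abs_div]
    have h2 : |(f (x + h) - f x) (v - w)| ≤ (L * |h|) * ‖v - w‖ := by
      calc |(f (x + h) - f x) (v - w)| ≤ ‖f (x + h) - f x‖ * ‖v - w‖ :=
            (f (x + h) - f x).le_opNorm (v - w)
        _ ≤ (L * |h|) * ‖v - w‖ := by
            apply mul_le_mul_of_nonneg_right _ (norm_nonneg _)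
            have := hf.dist_le_mul (x + h) hh x hxIcc
            rw [dist_eq_norm, dist_eq_norm] at this
            simpa using this
    rw [div_le_iff₀ (abs_pos.2 hh0)]
    calc |(f (x + h) - f x) (v - w)| ≤ (L * |h|) * ‖v - w‖ := h2
      _ = ↑L * ‖v - w‖ * |h| := by ring
  -- boundedness of the quotients
  have hbnd : ∀ v : Y, ∀ h : ℝ, x + h ∈ Set.Icc a b → h ≠ 0 → |q h v| ≤ L * ‖v‖ := by
    intro v h hh hh0
    have := key v 0 h hh hh0
    simpa [hq] using this
  -- convergence on the dense sequence
  set c : ℕ → ℝ := fun n => deriv (G n) x with hc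
  have hun : ∀ n, Tendsto (fun h => q h (u n)) l (nhds (c n)) := by
    intro n
    have h1 : Tendsto (fun h : ℝ => h⁻¹ • (G n (x + h) - G n x)) l (nhds (c n)) :=
      (hasDerivAt_iff_tendsto_slope_zero).1 (hdiff n).hasDerivAt
    apply h1.congr'
    filter_upwards [hmem] with h hh
    have e1 : G n (x + h) = f (x + h) (u n) := (hGeq n hh.1).symm
    have e2 : G n x = f x (u n) := (hGeq n hxIcc).symm
    simp [hq, e1, e2, smul_eq_mul, div_eq_inv_mul]
  -- existence of the limit for every `v`
  have hcexists : ∀ v : Y, ∃ cv : ℝ, Tendsto (fun h => q h v) l (nhds cv) := by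
    intro v
    have hC : Cauchy (Filter.map (fun h => q h v) l) := by
      rw [Metric.cauchy_iff]
      refine ⟨Filter.NeBot.map inferInstance _, ?_⟩
      intro ε hε
      obtain ⟨n, hn⟩ := hud.exists_dist_lt v (div_pos hε (by positivity : (0:ℝ) < 4 * (L + 1)))
      have hvn : (L : ℝ) * ‖v - u n‖ < ε / 4 := by
        have hd : ‖v - u n‖ < ε / (4 * (L + 1)) := by
          rw [← dist_eq_norm]; exact hn
        have hL1 : (0:ℝ) < L + 1 := by positivity
        calc (L : ℝ) * ‖v - u n‖ ≤ (L + 1) * ‖v - u n‖ :=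
              mul_le_mul_of_nonneg_right (by linarith) (norm_nonneg _)
          _ < (L + 1) * (ε / (4 * (L + 1))) := by
              apply mul_lt_mul_of_pos_left hd hL1
          _ = ε / 4 := by field_simp
      have hS : ∀ᶠ h in l, (x + h ∈ Set.Icc a b ∧ h ≠ 0) ∧ |q h (u n) - c n| < ε / 4 := by
        refine hmem.and ?_
        have := (hun n).eventually (Metric.ball_mem_nhds (c n) (by positivity : (0:ℝ) < ε / 4))
        filter_upwards [this] with h hh
        simpa [Real.dist_eq] using hh
      refine ⟨(fun h => q h v) '' {h | (x + h ∈ Set.Icc a b ∧ h ≠ 0) ∧ |q h (u n) - c n| < ε / 4},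
        Filter.image_mem_map hS, ?_⟩
      rintro _ ⟨h1, hh1, rfl⟩ _ ⟨h2, hh2, rfl⟩
      rw [Real.dist_eq]
      have k1 := key v (u n) h1 hh1.1.1 hh1.1.2
      have k2 := key v (u n) h2 hh2.1.1 hh2.1.2
      have t1 := hh1.2
      have t2 := hh2.2
      calc |q h1 v - q h2 v|
          ≤ |q h1 v - q h1 (u n)| + |q h1 (u n) - c n| + |c n - q h2 (u n)|
            + |q h2 (u n) - q h2 v| := by
            have := abs_sub_le (q h1 v) (q h1 (u n)) (q h2 v)
            have h4 : q h1 v - q h2 v =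
              (q h1 v - q h1 (u n)) + (q h1 (u n) - c n) + (c n - q h2 (u n))
              + (q h2 (u n) - q h2 v) := by ring
            rw [h4]
            refine (abs_add_le _ _).trans ?_
            gcongr
            exact (abs_add_le _ _).trans (by gcongr; exact abs_add_le _ _)
        _ < ε / 4 + ε / 4 + ε / 4 + ε / 4 := by
            have t3 : |c n - q h2 (u n)| < ε / 4 := by rw [abs_sub_comm]; exact t2
            have k2' : |q h2 (u n) - q h2 v| ≤ L * ‖v - u n‖ := by
              rw [abs_sub_comm]; exact k2
            gcongr
            · exact lt_of_le_of_lt k1 hvn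
            · exact lt_of_le_of_lt k2' hvn
        _ = ε := by ring
    obtain ⟨cv, hcv⟩ := CompleteSpace.complete hC
    exact ⟨cv, hcv⟩
  set φ : Y → ℝ := fun v => limUnder l (fun h => q h v) with hφdef
  have hφ : ∀ v, Tendsto (fun h => q h v) l (nhds (φ v)) :=
    fun v => tendsto_nhds_limUnder (hcexists v)
  have hadd : ∀ v w : Y, φ (v + w) = φ v + φ w := by
    intro v w
    refine tendsto_nhds_unique (hφ (v + w)) ?_
    have : (fun h => q h (v + w)) = fun h => q h v + q h w := by
      funext h
      simp only [hq, map_add]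
      ring
    rw [this]
    exact (hφ v).add (hφ w)
  have hsmul : ∀ (r : ℝ) (v : Y), φ (r • v) = r * φ v := by
    intro r v
    refine tendsto_nhds_unique (hφ (r • v)) ?_
    have : (fun h => q h (r • v)) = fun h => r * q h v := by
      funext h
      simp only [hq, _root_.map_smul, smul_eq_mul]
      ring
    rw [this]
    exact (hφ v).const_mul r
  have hφbnd : ∀ v : Y, ‖φ v‖ ≤ L * ‖v‖ := by
    intro v
    apply le_of_tendsto (hφ v).norm
    filter_upwards [hmem] with h hh
    simpa [Real.norm_eq_abs] using hbnd v h hh.1 hh.2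
  set φL : Y →ₗ[ℝ] ℝ :=
    { toFun := φ, map_add' := hadd, map_smul' := hsmul } with hφL
  refine ⟨φL.mkContinuous L hφbnd, ?_, ?_⟩
  · exact LinearMap.mkContinuous_norm_le _ L.coe_nonneg _
  · intro v
    exact hφ v
end
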